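/- Let G be a groupoid and A a G-graded k-algebra. The following are equivalent: (1) A is strongly graded (A_σ A_τ = A_{στ} whenever t(τ) = s(σ)); (2) the adjoint pair (−⊗_T A, (−)^{co kG}) between right T-modules and G-graded right A-modules is an equivalence of categories; (3) the canonical map can: A ⊗_T A → ⊕_{σ∈G₁} A·(1_{t(σ)})⊗u_σ, can(a⊗b) = ∑_{σ∈G₁} a b_σ ⊗ u_σ, is bijective; (4) can is surjective. Here T = ⊕_{x∈G₀} A_x. -/

import Mathlib

/-- A finite groupoid, given by sets of objects and morphisms with source,
target, identities, partial composition and inverses. -/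
structure FinGroupoid where
  O : Type
  M : Type
  [fO : Fintype O]
  [fM : Fintype M]
  [dO : DecidableEq O]
  [dM : DecidableEq M]
  s : M → O
  t : M → O
  e : O → M
  comp : M → M → M
  inv : M → M
  s_e : ∀ x, s (e x) = x
  t_e : ∀ x, t (e x) = x
  s_comp : ∀ σ τ, t τ = s σ → s (comp σ τ) = s τ
  t_comp : ∀ σ τ, t τ = s σ → t (comp σ τ) = t σ
  comp_assoc : ∀ σ τ ρ, t τ = s σ → t ρ = s τ →
    comp (comp σ τ) ρ = comp σ (comp τ ρ)
  e_comp : ∀ σ, comp (e (t σ)) σ = σ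
  comp_e : ∀ σ, comp σ (e (s σ)) = σ
  s_inv : ∀ σ, s (inv σ) = t σ
  t_inv : ∀ σ, t (inv σ) = s σ
  inv_comp : ∀ σ, comp (inv σ) σ = e (s σ)
  comp_inv : ∀ σ, comp σ (inv σ) = e (t σ)

attribute [instance] FinGroupoid.fO FinGroupoid.fM FinGroupoid.dO FinGroupoid.dM

/-- The multiplication of the groupoid algebra `kG`, on the free module
`G.M → k`:  `u_σ * u_τ = u_{στ}` if `t τ = s σ` and `0` otherwise. -/
noncomputable def gmul (k : Type) [CommRing k] (G : FinGroupoid) (f g : G.M → k) :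
    G.M → k := fun m =>
  ∑ p : G.M × G.M,
    if G.t p.2 = G.s p.1 ∧ G.comp p.1 p.2 = m then f p.1 * g p.2 else 0

/-- The unit `∑_{x ∈ G₀} u_{id_x}` of the groupoid algebra. -/
noncomputable def gone (k : Type) [CommRing k] (G : FinGroupoid) : G.M → k :=
  fun m => ∑ x : G.O, if G.e x = m then 1 else 0

/-- A `G`-graded `k`-algebra, encoded by the projections
`π σ : A → A_σ` onto the homogeneous components. -/
structure GradedAlg (k : Type) [CommRing k] (G : FinGroupoid) (A : Type)
    [Ring A] [Algebra k A] where
  π : G.M → (A →ₗ[k] A)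
  sum_pi : ∀ a : A, ∑ σ : G.M, π σ a = a
  pi_pi : ∀ (σ τ : G.M) (a : A), π σ (π τ a) = if σ = τ then π τ a else 0
  mul_comp : ∀ (σ τ : G.M) (a b : A), G.t τ = G.s σ →
    π σ a * π τ b = π (G.comp σ τ) (π σ a * π τ b)
  mul_ncomp : ∀ (σ τ : G.M) (a b : A), G.t τ ≠ G.s σ → π σ a * π τ b = 0
  one_supp : ∀ σ : G.M, (∀ x : G.O, σ ≠ G.e x) → π σ 1 = 0


open TensorProduct

variable (k : Type) [CommRing k] (G : FinGroupoid) (A : Type) [Ring A] [Algebra k A]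

/-- The subring `T = ⊕_{x∈G₀} A_x` of degree-identity components. -/
def Tset (gr : GradedAlg k G A) : Set A :=
  {a : A | ∀ σ : G.M, (∀ x : G.O, σ ≠ G.e x) → gr.π σ a = 0}

/-- The homogeneous component `A_σ`. -/
def Asub (gr : GradedAlg k G A) (σ : G.M) : Submodule k A where
  carrier := {a : A | gr.π σ a = a}
  add_mem' := by intro a b ha hb; simp only [Set.mem_setOf_eq] at *; rw [map_add, ha, hb]
  zero_mem' := by simp
  smul_mem' := by intro c a ha; simp only [Set.mem_setOf_eq] at *; rw [map_smul, ha]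

/-- `A` is strongly graded: `A_σ A_τ = A_{στ}` whenever `t(τ) = s(σ)`. -/
def StronglyGraded (gr : GradedAlg k G A) : Prop :=
  ∀ σ τ : G.M, G.t τ = G.s σ →
    Submodule.span k {p : A | ∃ a ∈ Asub k G A gr σ, ∃ b ∈ Asub k G A gr τ,
      p = a * b} = Asub k G A gr (G.comp σ τ)

/-- A `G`-graded right `A`-module. -/
structure GradedMod (gr : GradedAlg k G A) where
  Mc : Type
  [acg : AddCommGroup Mc]
  [mod : Module k Mc]
  act : A →ₗ[k] Module.End k Mc
  act_one : act 1 = LinearMap.id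
  act_mul : ∀ a b : A, act (a * b) = act b ∘ₗ act a
  πM : G.M → (Mc →ₗ[k] Mc)
  sum_pi : ∀ m, ∑ σ : G.M, πM σ m = m
  pi_pi : ∀ (σ τ : G.M) (m : Mc), πM σ (πM τ m) = if σ = τ then πM τ m else 0
  mul_comp : ∀ (σ τ : G.M) (m : Mc) (a : A), G.t τ = G.s σ →
    act (gr.π τ a) (πM σ m) = πM (G.comp σ τ) (act (gr.π τ a) (πM σ m))
  mul_ncomp : ∀ (σ τ : G.M) (m : Mc) (a : A), G.t τ ≠ G.s σ →
    act (gr.π τ a) (πM σ m) = 0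

attribute [instance] GradedMod.acg GradedMod.mod

/-- The coinvariants `M^{co kG} = ⊕_{x∈G₀} M_x` of a graded module. -/
def Mco (gr : GradedAlg k G A) (X : GradedMod k G A gr) : Submodule k X.Mc where
  carrier := {m : X.Mc | ∀ σ : G.M, (∀ x : G.O, σ ≠ G.e x) → X.πM σ m = 0}
  add_mem' := by intro a b ha hb σ hσ; rw [map_add, ha σ hσ, hb σ hσ, add_zero]
  zero_mem' := by intro σ _; simp
  smul_mem' := by intro c a ha σ hσ; rw [map_smul, ha σ hσ, smul_zero]

/-- The counit `ζ_M : M^{co kG} ⊗_T A → M`, at the level of `M^{co kG} ⊗ₖ A`. -/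
noncomputable def zmap (gr : GradedAlg k G A) (X : GradedMod k G A gr) :
    (Mco k G A gr X) ⊗[k] A →ₗ[k] X.Mc :=
  TensorProduct.lift (LinearMap.mk₂ k
    (fun (m : Mco k G A gr X) (a : A) => X.act a (m : X.Mc))
    (by intro a b c; simp)
    (by intro t a c; simp)
    (by intro a b c; simp [map_add, LinearMap.add_apply])
    (by intro t a c; simp [map_smul, LinearMap.smul_apply]))

/-- The `T`-balancing relations in `M^{co kG} ⊗ₖ A`. -/
noncomputable def balMod (gr : GradedAlg k G A) (X : GradedMod k G A gr) :
    Submodule k ((Mco k G A gr X) ⊗[k] A) :=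
  Submodule.span k {z | ∃ (m m' : Mco k G A gr X) (t a : A),
    t ∈ Tset k G A gr ∧ (m' : X.Mc) = X.act t (m : X.Mc) ∧
    z = m' ⊗ₜ[k] a - m ⊗ₜ[k] (t * a)}

/-- The `T`-balancing relations in `N ⊗ₖ A` for a right `T`-module `N`. -/
noncomputable def balT (gr : GradedAlg k G A) (N : Type) [AddCommGroup N]
    [Module k N] (ract : A → N →ₗ[k] N) : Submodule k (N ⊗[k] A) :=
  Submodule.span k {z | ∃ (n : N) (a t : A), t ∈ Tset k G A gr ∧
    z = (ract t n) ⊗ₜ[k] a - n ⊗ₜ[k] (t * a)}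

/-- The unit map `ν_N : N → N ⊗_T A`, `ν_N(n) = ∑_{x∈G₀} n·1_x ⊗ 1_x`. -/
noncomputable def nuMap (gr : GradedAlg k G A) (N : Type) [AddCommGroup N]
    [Module k N] (ract : A → N →ₗ[k] N) :
    N → (N ⊗[k] A) ⧸ balT k G A gr N ract := fun n =>
  ∑ x : G.O, Submodule.Quotient.mk
    ((ract (gr.π (G.e x) 1) n) ⊗ₜ[k] gr.π (G.e x) 1)

/-- The coinvariants of `N ⊗_T A`: the image of `N ⊗ₖ T`. -/
noncomputable def CoSub (gr : GradedAlg k G A) (N : Type) [AddCommGroup N]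
    [Module k N] (ract : A → N →ₗ[k] N) :
    Submodule k ((N ⊗[k] A) ⧸ balT k G A gr N ract) :=
  Submodule.span k {y | ∃ (n : N) (a : A), a ∈ Tset k G A gr ∧
    y = Submodule.Quotient.mk (n ⊗ₜ[k] a)}

/-- The pair `(−⊗_T A, (−)^{co kG})` is an equivalence: both the counit `ζ`
(for every graded module) and the unit `ν` (for every `T`-module) are
bijective. -/
def IsEquivalencePair (gr : GradedAlg k G A) : Prop :=
  (∀ X : GradedMod k G A gr,
    (∀ z ∈ balMod k G A gr X, zmap k G A gr X z = 0) ∧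
    (∀ z, zmap k G A gr X z = 0 → z ∈ balMod k G A gr X) ∧
    Function.Surjective (zmap k G A gr X)) ∧
  (∀ (N : Type) (_ : AddCommGroup N) (_ : Module k N)
    (ract : A → N →ₗ[k] N),
    (∀ t t' : A, t ∈ Tset k G A gr → t' ∈ Tset k G A gr →
      ∀ n : N, ract (t * t') n = ract t' (ract t n)) →
    (∀ n : N, ract 1 n = n) →
    (∀ t t' : A, t ∈ Tset k G A gr → t' ∈ Tset k G A gr →
      ract (t + t') = ract t + ract t') →
    (∀ (c : k) (t : A), t ∈ Tset k G A gr → ract (c • t) = c • ract t) →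
    ((∀ n : N, nuMap k G A gr N ract n ∈ CoSub k G A gr N ract) ∧
     Function.Injective (nuMap k G A gr N ract) ∧
     (∀ y ∈ CoSub k G A gr N ract, ∃ n, nuMap k G A gr N ract n = y)))

/-- The canonical map `can : A ⊗ A → A ⊗ kG ⊇ C`,
`can(a⊗b) = ∑_σ a b_σ ⊗ u_σ`, encoded with values in `G.M → A`. -/
noncomputable def canMap (gr : GradedAlg k G A) : A ⊗[k] A →ₗ[k] (G.M → A) :=
  TensorProduct.lift (LinearMap.mk₂ k
    (fun a b : A => fun σ : G.M => a * gr.π σ b)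
    (by intro a b c; funext σ; simp [add_mul])
    (by intro t a c; funext σ; simp [smul_mul_assoc])
    (by intro a b c; funext σ; simp [map_add, mul_add])
    (by intro t a c; funext σ; simp [map_smul, mul_smul_comm]))

/-- Membership in the coring `C = ⊕_σ A 1_{s(σ)} ⊗ u_σ ⊆ A ⊗ kG`. -/
def inC (gr : GradedAlg k G A) (f : G.M → A) : Prop :=
  ∀ σ : G.M, f σ * gr.π (G.e (G.s σ)) 1 = f σ

/-- `can : A ⊗_T A → C` is bijective. -/
def CanBijective (gr : GradedAlg k G A) : Prop :=
  (∀ z ∈ Submodule.span k {z : A ⊗[k] A | ∃ (a b t : A),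
      t ∈ Tset k G A gr ∧ z = (a * t) ⊗ₜ[k] b - a ⊗ₜ[k] (t * b)},
    canMap k G A gr z = 0) ∧
  (∀ z : A ⊗[k] A, canMap k G A gr z = 0 →
    z ∈ Submodule.span k {z : A ⊗[k] A | ∃ (a b t : A),
      t ∈ Tset k G A gr ∧ z = (a * t) ⊗ₜ[k] b - a ⊗ₜ[k] (t * b)}) ∧
  (∀ z : A ⊗[k] A, inC k G A gr (canMap k G A gr z)) ∧
  (∀ f : G.M → A, inC k G A gr f → ∃ z, canMap k G A gr z = f)

/-- `can : A ⊗_T A → C` is surjective. -/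
def CanSurjective (gr : GradedAlg k G A) : Prop :=
  ∀ f : G.M → A, inC k G A gr f → ∃ z, canMap k G A gr z = f

namespace SGaux

theorem e_inj (G : FinGroupoid) : Function.Injective G.e := by
  intro x y h
  have := G.s_e x; rw [h, G.s_e] at this; exact this.symm

theorem inv_inv (G : FinGroupoid) (σ : G.M) : G.inv (G.inv σ) = σ := by
  have h1 : G.comp (G.comp (G.inv (G.inv σ)) (G.inv σ)) σ
      = G.comp (G.inv (G.inv σ)) (G.comp (G.inv σ) σ) :=
    G.comp_assoc _ _ _ (by rw [G.t_inv, G.s_inv, G.t_inv]) (G.s_inv σ).symm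
  rw [G.inv_comp, G.inv_comp, G.s_inv] at h1
  rw [G.e_comp] at h1
  have h2 : G.comp (G.inv (G.inv σ)) (G.e (G.s σ)) = G.inv (G.inv σ) := by
    have h3 : G.s (G.inv (G.inv σ)) = G.s σ := by rw [G.s_inv, G.t_inv]
    conv_lhs => rw [← h3]
    rw [G.comp_e]
  rw [h2] at h1; exact h1.symm

/-- Left cancellation: `ρσ = ρτ → σ = τ` when composable. -/
theorem left_cancel (G : FinGroupoid) (ρ σ τ : G.M) (h1 : G.t σ = G.s ρ)
    (h2 : G.t τ = G.s ρ) (h : G.comp ρ σ = G.comp ρ τ) : σ = τ := by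
  have e1 : G.comp (G.inv ρ) (G.comp ρ σ) = σ := by
    rw [← G.comp_assoc _ _ _ (G.s_inv ρ).symm h1, G.inv_comp, ← h1, G.e_comp]
  have e2 : G.comp (G.inv ρ) (G.comp ρ τ) = τ := by
    rw [← G.comp_assoc _ _ _ (G.s_inv ρ).symm h2, G.inv_comp, ← h2, G.e_comp]
  rw [← e1, h, e2]

/-- If `ρ ∘ σ⁻¹ = e (t σ)` with `s ρ = s σ` then `ρ = σ`. -/
theorem comp_inv_unique (G : FinGroupoid) (ρ σ : G.M) (h1 : G.s ρ = G.s σ)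
    (h : G.comp ρ (G.inv σ) = G.e (G.t σ)) : ρ = σ := by
  have hc' : G.t (G.inv σ) = G.s ρ := by rw [G.t_inv, h1]
  have h4 := G.comp_assoc ρ (G.inv σ) σ hc' (G.s_inv σ).symm
  rw [h, G.inv_comp, G.e_comp] at h4
  rw [h4, ← h1, G.comp_e]

theorem inv_comp_unique (G : FinGroupoid) (ρ σ : G.M) (h1 : G.t ρ = G.t σ)
    (h : G.comp (G.inv σ) ρ = G.e (G.s σ)) : ρ = σ := by
  have hc : G.t ρ = G.s (G.inv σ) := by rw [G.s_inv, h1]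
  have h4 := G.comp_assoc σ (G.inv σ) ρ (G.t_inv σ) hc
  rw [h, G.comp_inv, ← h1, G.e_comp, G.comp_e] at h4
  exact h4

end SGaux
namespace SGaux

variable {k G A}

theorem mem_Asub {gr : GradedAlg k G A} {σ : G.M} {a : A} :
    a ∈ Asub k G A gr σ ↔ gr.π σ a = a := Iff.rfl

theorem pi_mem_Asub (gr : GradedAlg k G A) (σ : G.M) (a : A) :
    gr.π σ a ∈ Asub k G A gr σ := by
  show gr.π σ (gr.π σ a) = gr.π σ a
  rw [gr.pi_pi, if_pos rfl]

theorem sum_one (gr : GradedAlg k G A) : ∑ x : G.O, gr.π (G.e x) 1 = (1 : A) := by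
  have h1 : ∑ σ ∈ Finset.univ.image G.e, gr.π σ (1 : A)
      = ∑ x : G.O, gr.π (G.e x) (1 : A) :=
    Finset.sum_image (fun x _ y _ h => e_inj G h)
  rw [← h1]
  rw [Finset.sum_subset (Finset.subset_univ _) (fun σ _ hσ => ?_)]
  · exact gr.sum_pi 1
  · apply gr.one_supp
    intro x hx
    exact hσ (Finset.mem_image.2 ⟨x, Finset.mem_univ x, hx.symm⟩)

theorem pi_mul_one (gr : GradedAlg k G A) (σ : G.M) (a : A) :
    gr.π σ a * gr.π (G.e (G.s σ)) 1 = gr.π σ a := by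
  have h2 : ∑ x : G.O, gr.π σ a * gr.π (G.e x) 1
      = gr.π σ a * gr.π (G.e (G.s σ)) 1 := by
    refine Finset.sum_eq_single (G.s σ) (fun x _ hx => ?_)
      (fun h => absurd (Finset.mem_univ _) h)
    exact gr.mul_ncomp σ (G.e x) a 1 (by rw [G.t_e]; exact hx)
  rw [← h2, ← Finset.mul_sum, sum_one, mul_one]

theorem one_mul_pi (gr : GradedAlg k G A) (σ : G.M) (a : A) :
    gr.π (G.e (G.t σ)) 1 * gr.π σ a = gr.π σ a := by
  have h2 : ∑ x : G.O, gr.π (G.e x) 1 * gr.π σ a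
      = gr.π (G.e (G.t σ)) 1 * gr.π σ a := by
    refine Finset.sum_eq_single (G.t σ) (fun x _ hx => ?_)
      (fun h => absurd (Finset.mem_univ _) h)
    exact gr.mul_ncomp (G.e x) σ 1 a (by rw [G.s_e]; exact fun h => hx h.symm)
  rw [← h2, ← Finset.sum_mul, sum_one, one_mul]

theorem mul_one_of_mem (gr : GradedAlg k G A) {σ : G.M} {a : A}
    (h : a ∈ Asub k G A gr σ) : a * gr.π (G.e (G.s σ)) 1 = a := by
  conv_lhs => rw [← h]
  rw [pi_mul_one, h]

theorem one_mul_of_mem (gr : GradedAlg k G A) {σ : G.M} {a : A}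
    (h : a ∈ Asub k G A gr σ) : gr.π (G.e (G.t σ)) 1 * a = a := by
  conv_lhs => rw [← h]
  rw [one_mul_pi, h]

theorem one_filter_mul (gr : GradedAlg k G A) (x : G.O) (a : A) :
    ∑ τ : G.M, (if G.t τ = x then gr.π τ a else 0) = gr.π (G.e x) 1 * a := by
  conv_rhs => rw [← gr.sum_pi a]
  rw [Finset.mul_sum]
  apply Finset.sum_congr rfl
  intro τ _
  by_cases h : G.t τ = x
  · rw [if_pos h, ← h, one_mul_pi]
  · rw [if_neg h]
    exact (gr.mul_ncomp (G.e x) τ 1 a (by rw [G.s_e]; exact fun hh => h hh)).symm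

theorem mem_Tset_iff {gr : GradedAlg k G A} {a : A} :
    a ∈ Tset k G A gr ↔ ∀ σ : G.M, (∀ x : G.O, σ ≠ G.e x) → gr.π σ a = 0 := Iff.rfl

theorem one_mem_Tset (gr : GradedAlg k G A) (x : G.O) :
    gr.π (G.e x) 1 ∈ Tset k G A gr := by
  intro σ hσ
  rw [gr.pi_pi, if_neg (hσ x)]

theorem mem_Tset_of_pi (gr : GradedAlg k G A) {y : G.O} {c : A}
    (h : gr.π (G.e y) c = c) : c ∈ Tset k G A gr := by
  intro σ hσ
  rw [← h, gr.pi_pi, if_neg (hσ y)]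

theorem sum_pi_T (gr : GradedAlg k G A) {t : A} (ht : t ∈ Tset k G A gr) :
    ∑ x : G.O, gr.π (G.e x) t = t := by
  have h1 : ∑ σ ∈ Finset.univ.image G.e, gr.π σ t
      = ∑ x : G.O, gr.π (G.e x) t :=
    Finset.sum_image (fun x _ y _ h => e_inj G h)
  rw [← h1]
  rw [Finset.sum_subset (Finset.subset_univ _) (fun σ _ hσ => ?_)]
  · exact gr.sum_pi t
  · exact ht σ (fun x hx => hσ (Finset.mem_image.2 ⟨x, Finset.mem_univ x, hx.symm⟩))

theorem pi_T_mul (gr : GradedAlg k G A) {t : A} (ht : t ∈ Tset k G A gr)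
    (τ : G.M) (a : A) : gr.π τ (t * a) = t * gr.π τ a := by
  have key : ∀ x : G.O, ∀ μ : G.M,
      gr.π τ (gr.π (G.e x) t * gr.π μ a)
        = if τ = μ then gr.π (G.e x) t * gr.π μ a else 0 := by
    intro x μ
    by_cases hc : G.t μ = G.s (G.e x)
    · have hx : G.t μ = x := by rw [G.s_e] at hc; exact hc
      have h2 := gr.mul_comp (G.e x) μ t a hc
      have h3 : G.comp (G.e x) μ = μ := by rw [← hx]; exact G.e_comp μ
      rw [h3] at h2
      rw [h2, gr.pi_pi]
    · rw [gr.mul_ncomp (G.e x) μ t a hc]; simp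
  conv_lhs => rw [← sum_pi_T gr ht, ← gr.sum_pi a, Finset.sum_mul_sum]
  rw [map_sum]
  have h4 : ∀ x : G.O, gr.π τ (∑ μ : G.M, gr.π (G.e x) t * gr.π μ a)
      = gr.π (G.e x) t * gr.π τ a := by
    intro x
    rw [map_sum]
    simp only [key]
    simp
  rw [Finset.sum_congr rfl (fun x _ => h4 x), ← Finset.sum_mul, sum_pi_T gr ht]

/-- `Tset` is closed under multiplication. -/
theorem Tset_mul (gr : GradedAlg k G A) {s t : A} (hs : s ∈ Tset k G A gr)
    (ht : t ∈ Tset k G A gr) : s * t ∈ Tset k G A gr := by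
  intro σ hσ
  rw [pi_T_mul gr hs, ht σ hσ, mul_zero]

/-- Component extraction, homogeneous factor on the right. -/
theorem extract_right (gr : GradedAlg k G A) (σ : G.M) (a b : A) :
    gr.π (G.e (G.t σ)) (a * gr.π (G.inv σ) b)
      = gr.π σ a * gr.π (G.inv σ) b := by
  have key : ∀ ρ : G.M, gr.π (G.e (G.t σ)) (gr.π ρ a * gr.π (G.inv σ) b)
      = if ρ = σ then gr.π ρ a * gr.π (G.inv σ) b else 0 := by
    intro ρ
    by_cases hc : G.t (G.inv σ) = G.s ρ
    · have h2 := gr.mul_comp ρ (G.inv σ) a b hc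
      by_cases hρ : ρ = σ
      · subst hρ
        rw [G.comp_inv] at h2
        rw [h2, gr.pi_pi, if_pos rfl, if_pos rfl, ← h2]
      · rw [if_neg hρ, h2, gr.pi_pi, if_neg ?_]
        intro hcontra
        exact hρ (comp_inv_unique G ρ σ (by rw [G.t_inv] at hc; exact hc.symm) hcontra.symm)
    · rw [gr.mul_ncomp ρ (G.inv σ) a b hc]
      simp
  conv_lhs => rw [← gr.sum_pi a, Finset.sum_mul, map_sum]
  simp only [key]
  simp

/-- Component extraction, homogeneous factor on the left. -/
theorem extract_left (gr : GradedAlg k G A) (ρ : G.M) (m a : A) :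
    gr.π (G.e (G.t ρ)) (gr.π ρ m * a)
      = gr.π ρ m * gr.π (G.inv ρ) a := by
  have key : ∀ τ : G.M, gr.π (G.e (G.t ρ)) (gr.π ρ m * gr.π τ a)
      = if τ = G.inv ρ then gr.π ρ m * gr.π τ a else 0 := by
    intro τ
    by_cases hc : G.t τ = G.s ρ
    · have h2 := gr.mul_comp ρ τ m a hc
      by_cases hτ : τ = G.inv ρ
      · subst hτ
        rw [G.comp_inv] at h2
        rw [h2, gr.pi_pi, if_pos rfl, if_pos rfl, ← h2]
      · rw [if_neg hτ, h2, gr.pi_pi, if_neg ?_]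
        intro hcontra
        apply hτ
        exact left_cancel G ρ τ (G.inv ρ) hc (by rw [G.t_inv])
          (by rw [← hcontra, G.comp_inv])
    · rw [gr.mul_ncomp ρ τ m a hc]
      simp
  conv_lhs => rw [← gr.sum_pi a, Finset.mul_sum, map_sum]
  simp only [key]
  simp

end SGaux
namespace SGaux

variable {k G A}

/-- Partial units: for each `σ`, `1_{t σ} = ∑ aᵢ bᵢ` with `aᵢ ∈ A_σ`,
`bᵢ ∈ A_{σ⁻¹}`. -/
def Pprop (gr : GradedAlg k G A) : Prop :=
  ∀ σ : G.M, ∃ (n : ℕ) (a b : Fin n → A),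
    (∀ i, a i ∈ Asub k G A gr σ) ∧ (∀ i, b i ∈ Asub k G A gr (G.inv σ)) ∧
    ∑ i, a i * b i = gr.π (G.e (G.t σ)) 1

theorem span_prod_extract (gr : GradedAlg k G A) (σ τ : G.M) (x : A)
    (hx : x ∈ Submodule.span k {p : A | ∃ a ∈ Asub k G A gr σ,
      ∃ b ∈ Asub k G A gr τ, p = a * b}) :
    ∃ (n : ℕ) (a b : Fin n → A), (∀ i, a i ∈ Asub k G A gr σ) ∧
      (∀ i, b i ∈ Asub k G A gr τ) ∧ ∑ i, a i * b i = x := by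
  rw [Submodule.mem_span_set'] at hx
  obtain ⟨n, f, g, hsum⟩ := hx
  have hg : ∀ i, ∃ a ∈ Asub k G A gr σ, ∃ b ∈ Asub k G A gr τ, (g i : A) = a * b :=
    fun i => (g i).2
  choose a ha b hb hab using hg
  refine ⟨n, fun i => f i • a i, b, fun i => Submodule.smul_mem _ _ (ha i),
    hb, ?_⟩
  rw [← hsum]
  refine Finset.sum_congr rfl (fun i _ => ?_)
  rw [smul_mul_assoc, ← hab]

theorem strongly_graded_P (gr : GradedAlg k G A)
    (h : StronglyGraded k G A gr) : Pprop gr := by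
  intro σ
  have h1 := h σ (G.inv σ) (G.t_inv σ)
  rw [G.comp_inv] at h1
  have h2 : gr.π (G.e (G.t σ)) 1 ∈ Asub k G A gr (G.e (G.t σ)) :=
    pi_mem_Asub gr _ 1
  rw [← h1] at h2
  exact span_prod_extract gr σ (G.inv σ) _ h2

theorem P_strongly_graded (gr : GradedAlg k G A) (h : Pprop gr) :
    StronglyGraded k G A gr := by
  intro σ τ hc
  apply le_antisymm
  · rw [Submodule.span_le]
    rintro p ⟨a, ha, b, hb, rfl⟩
    have h2 := gr.mul_comp σ τ a b hc
    rw [mem_Asub] at ha hb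
    rw [ha, hb] at h2
    exact h2.symm
  · intro c hcm
    obtain ⟨n, a, b, ha, hb, hab⟩ := h σ
    have htc : G.t (G.comp σ τ) = G.t σ := G.t_comp σ τ hc
    have h3 : gr.π (G.e (G.t σ)) 1 * c = c := by
      have := one_mul_of_mem gr hcm
      rw [htc] at this; exact this
    have hc1 : ∑ i, a i * (b i * c) = c := by
      calc ∑ i, a i * (b i * c) = (∑ i, a i * b i) * c := by
            rw [Finset.sum_mul]
            exact Finset.sum_congr rfl (fun i _ => (mul_assoc _ _ _).symm)
        _ = gr.π (G.e (G.t σ)) 1 * c := by rw [hab]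
        _ = c := h3
    have hmem : ∑ i, a i * (b i * c) ∈ Submodule.span k {p : A |
        ∃ a ∈ Asub k G A gr σ, ∃ b ∈ Asub k G A gr τ, p = a * b} := by
      apply Submodule.sum_mem
      intro i _
      apply Submodule.subset_span
      have hbc : b i * c ∈ Asub k G A gr τ := by
        have hcomp : G.t (G.comp σ τ) = G.s (G.inv σ) := by
          rw [htc, G.s_inv]
        have h4 := gr.mul_comp (G.inv σ) (G.comp σ τ) (b i) c hcomp
        rw [mem_Asub] at hcm
        have hbi := (hb i)
        rw [mem_Asub] at hbi
        rw [hbi, hcm] at h4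
        have h5 : G.comp (G.inv σ) (G.comp σ τ) = τ := by
          rw [← G.comp_assoc _ _ _ (G.s_inv σ).symm hc, G.inv_comp, ← hc, G.e_comp]
        rw [h5] at h4
        exact h4.symm
      exact ⟨a i, ha i, b i * c, hbc, rfl⟩
    rwa [hc1] at hmem

theorem Punit (gr : GradedAlg k G A) (h : Pprop gr) (σ : G.M) :
    ∃ (n : ℕ) (u v : Fin n → A),
      (∀ j, u j ∈ Asub k G A gr (G.inv σ)) ∧ (∀ j, v j ∈ Asub k G A gr σ) ∧
      ∑ j, u j * v j = gr.π (G.e (G.s σ)) 1 := by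
  obtain ⟨n, u, v, hu, hv, huv⟩ := h (G.inv σ)
  rw [inv_inv] at hv
  rw [G.t_inv] at huv
  exact ⟨n, u, v, hu, hv, huv⟩

end SGaux
namespace SGaux

variable {k G A}

theorem canMap_tmul (gr : GradedAlg k G A) (a b : A) :
    canMap k G A gr (a ⊗ₜ[k] b) = fun σ : G.M => a * gr.π σ b := rfl

theorem canMap_apply (gr : GradedAlg k G A) (a b : A) (σ : G.M) :
    canMap k G A gr (a ⊗ₜ[k] b) σ = a * gr.π σ b := rfl

/-- The balancing relations for `can`. -/
def Bspan (gr : GradedAlg k G A) : Submodule k (A ⊗[k] A) :=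
  Submodule.span k {z : A ⊗[k] A | ∃ (a b t : A),
    t ∈ Tset k G A gr ∧ z = (a * t) ⊗ₜ[k] b - a ⊗ₜ[k] (t * b)}

theorem can_kills (gr : GradedAlg k G A) :
    ∀ z ∈ Bspan gr, canMap k G A gr z = 0 := by
  have hle : Bspan gr ≤ LinearMap.ker (canMap k G A gr) := by
    rw [Bspan, Submodule.span_le]
    rintro z ⟨a, b, t, ht, rfl⟩
    rw [SetLike.mem_coe, LinearMap.mem_ker, map_sub]
    funext σ
    rw [Pi.sub_apply, Pi.zero_apply, canMap_apply, canMap_apply,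
      pi_T_mul gr ht, mul_assoc, sub_self]
  exact fun z hz => hle hz

theorem can_inC (gr : GradedAlg k G A) (z : A ⊗[k] A) :
    inC k G A gr (canMap k G A gr z) := by
  induction z using TensorProduct.induction_on with
  | zero => intro σ; rw [map_zero]; simp
  | tmul a b =>
    intro σ
    rw [canMap_apply, mul_assoc, pi_mul_one]
  | add x y hx hy =>
    intro σ
    rw [map_add, Pi.add_apply, add_mul, hx σ, hy σ]

theorem can_surj_P (gr : GradedAlg k G A) (h : CanSurjective k G A gr) :
    Pprop gr := by
  intro σ
  set f : G.M → A := fun τ => if τ = G.inv σ then gr.π (G.e (G.t σ)) 1 else 0 with hf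
  have hinC : inC k G A gr f := by
    intro τ
    by_cases hτ : τ = G.inv σ
    · subst hτ
      simp only [hf, if_pos rfl]
      have h2 := pi_mul_one gr (G.e (G.t σ)) (1 : A)
      rw [G.s_e] at h2
      rw [G.s_inv]
      exact h2
    · simp only [hf, if_neg hτ, zero_mul]
  obtain ⟨z, hz⟩ := h f hinC
  have key : ∀ w : A ⊗[k] A,
      gr.π (G.e (G.t σ)) ((canMap k G A gr w) (G.inv σ)) ∈
        Submodule.span k {p : A | ∃ a ∈ Asub k G A gr σ,
          ∃ b ∈ Asub k G A gr (G.inv σ), p = a * b} := by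
    intro w
    induction w using TensorProduct.induction_on with
    | zero => rw [map_zero]; simp
    | tmul a b =>
      rw [canMap_apply]
      have h3 : a * gr.π (G.inv σ) b
          = a * gr.π (G.inv σ) (gr.π (G.inv σ) b) := by
        rw [gr.pi_pi, if_pos rfl]
      rw [h3, extract_right]
      exact Submodule.subset_span ⟨_, pi_mem_Asub gr σ a, _,
        pi_mem_Asub gr (G.inv σ) (gr.π (G.inv σ) b), rfl⟩
    | add x y hx hy =>
      rw [map_add, Pi.add_apply, map_add]
      exact Submodule.add_mem _ hx hy
  have h4 := key z
  rw [hz] at h4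
  simp only [hf, if_pos rfl] at h4
  rw [gr.pi_pi, if_pos rfl] at h4
  exact span_prod_extract gr σ (G.inv σ) _ h4

theorem SG_canBijective (gr : GradedAlg k G A) (hP : Pprop gr) :
    CanBijective k G A gr := by
  choose n u v hu hv huv using fun σ => Punit gr hP σ
  -- the candidate inverse map φ
  set φ : (G.M → A) →ₗ[k] A ⊗[k] A :=
    ∑ σ : G.M, ∑ j : Fin (n σ),
      ((TensorProduct.mk k A A).flip (v σ j)).comp
        ((LinearMap.mulRight k (u σ j)).comp (LinearMap.proj σ)) with hφ
  have hφ_apply : ∀ f : G.M → A,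
      φ f = ∑ σ : G.M, ∑ j : Fin (n σ), (f σ * u σ j) ⊗ₜ[k] v σ j := by
    intro f
    rw [hφ]
    rw [LinearMap.sum_apply]
    refine Finset.sum_congr rfl (fun σ _ => ?_)
    rw [LinearMap.sum_apply]
    rfl
  -- can ∘ φ = id on C
  have hP1 : ∀ f : G.M → A, inC k G A gr f → canMap k G A gr (φ f) = f := by
    intro f hf
    funext τ
    rw [hφ_apply, map_sum, Finset.sum_apply]
    have h1 : ∀ σ : G.M,
        (canMap k G A gr (∑ j : Fin (n σ), (f σ * u σ j) ⊗ₜ[k] v σ j)) τ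
          = if τ = σ then f σ else 0 := by
      intro σ
      rw [map_sum, Finset.sum_apply]
      have h2 : ∀ j : Fin (n σ),
          (canMap k G A gr ((f σ * u σ j) ⊗ₜ[k] v σ j)) τ
            = if τ = σ then f σ * (u σ j * v σ j) else 0 := by
        intro j
        rw [canMap_apply]
        have hvj : gr.π σ (v σ j) = v σ j := hv σ j
        have h3 : gr.π τ (v σ j) = if τ = σ then v σ j else 0 := by
          conv_lhs => rw [← hvj]
          rw [gr.pi_pi, hvj]
        rw [h3]
        by_cases hτσ : τ = σ
        · rw [if_pos hτσ, if_pos hτσ, mul_assoc]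
        · rw [if_neg hτσ, if_neg hτσ, mul_zero]
      rw [Finset.sum_congr rfl (fun j _ => h2 j)]
      by_cases hτσ : τ = σ
      · subst hτσ
        simp only [if_pos rfl, if_true]
        rw [← Finset.mul_sum, huv]
        exact hf τ
      · simp only [if_neg hτσ]
        simp
    rw [Finset.sum_congr rfl (fun σ _ => h1 σ)]
    simp
  -- z - φ (can z) ∈ Bspan
  have hP2 : ∀ z : A ⊗[k] A, z - φ (canMap k G A gr z) ∈ Bspan gr := by
    intro z
    induction z using TensorProduct.induction_on with
    | zero => rw [map_zero, map_zero, sub_zero]; exact Submodule.zero_mem _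
    | tmul a b =>
      rw [hφ_apply (canMap k G A gr (a ⊗ₜ[k] b))]
      simp only [canMap_apply]
      have hT : ∀ (σ : G.M) (j : Fin (n σ)),
          gr.π σ b * u σ j ∈ Tset k G A gr := by
        intro σ j
        apply mem_Tset_of_pi gr (y := G.t σ)
        have h5 := gr.mul_comp σ (G.inv σ) b (u σ j) (by rw [G.t_inv])
        rw [G.comp_inv] at h5
        rw [hu σ j] at h5
        exact h5.symm
      have hsplit : a ⊗ₜ[k] b
          = ∑ σ : G.M, ∑ j : Fin (n σ), a ⊗ₜ[k] ((gr.π σ b * u σ j) * v σ j) := by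
        have h6 : ∀ σ : G.M,
            ∑ j : Fin (n σ), (gr.π σ b * u σ j) * v σ j = gr.π σ b := by
          intro σ
          have : ∀ j : Fin (n σ), (gr.π σ b * u σ j) * v σ j
              = gr.π σ b * (u σ j * v σ j) := fun j => mul_assoc _ _ _
          rw [Finset.sum_congr rfl (fun j _ => this j), ← Finset.mul_sum, huv]
          rw [pi_mul_one]
        conv_lhs => rw [← gr.sum_pi b, TensorProduct.tmul_sum]
        refine Finset.sum_congr rfl (fun σ _ => ?_)
        rw [← TensorProduct.tmul_sum, h6 σ]
      rw [hsplit, ← Finset.sum_sub_distrib]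
      apply Submodule.sum_mem
      intro σ _
      rw [← Finset.sum_sub_distrib]
      apply Submodule.sum_mem
      intro j _
      have hmem : (a * (gr.π σ b * u σ j)) ⊗ₜ[k] v σ j
            - a ⊗ₜ[k] ((gr.π σ b * u σ j) * v σ j) ∈ Bspan gr :=
        Submodule.subset_span ⟨a, v σ j, gr.π σ b * u σ j, hT σ j, rfl⟩
      have hneg := Submodule.neg_mem _ hmem
      rw [neg_sub] at hneg
      simp only [mul_assoc] at hneg ⊢
      exact hneg
    | add x y hx hy =>
      rw [map_add, map_add, add_sub_add_comm]
      exact Submodule.add_mem _ hx hy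
  refine ⟨can_kills gr, ?_, can_inC gr, ?_⟩
  · intro z hz
    have h7 := hP2 z
    rw [hz, map_zero, sub_zero] at h7
    exact h7
  · intro f hf
    exact ⟨φ f, hP1 f hf⟩

end SGaux
namespace SGaux

variable {k G A}

theorem zero_mem_Tset (gr : GradedAlg k G A) : (0 : A) ∈ Tset k G A gr := by
  intro σ _; rw [map_zero]

theorem add_mem_Tset (gr : GradedAlg k G A) {s t : A} (hs : s ∈ Tset k G A gr)
    (ht : t ∈ Tset k G A gr) : s + t ∈ Tset k G A gr := by
  intro σ hσ; rw [map_add, hs σ hσ, ht σ hσ, add_zero]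

theorem pi_e_mem_Tset (gr : GradedAlg k G A) (x : G.O) (a : A) :
    gr.π (G.e x) a ∈ Tset k G A gr :=
  mem_Tset_of_pi gr (by rw [gr.pi_pi, if_pos rfl])

theorem one_mul_one_self (gr : GradedAlg k G A) (x : G.O) :
    gr.π (G.e x) 1 * gr.π (G.e x) 1 = gr.π (G.e x) (1 : A) := by
  have h := pi_mul_one gr (G.e x) (1 : A)
  rw [G.s_e] at h
  exact h

section UnitPart

variable {N : Type} [AddCommGroup N] [Module k N] (gr : GradedAlg k G A)
  (ract : A → N →ₗ[k] N)
  (hmul : ∀ t t' : A, t ∈ Tset k G A gr → t' ∈ Tset k G A gr →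
    ∀ n : N, ract (t * t') n = ract t' (ract t n))
  (hone : ∀ n : N, ract 1 n = n)
  (hadd : ∀ t t' : A, t ∈ Tset k G A gr → t' ∈ Tset k G A gr →
    ract (t + t') = ract t + ract t')
  (hsmul : ∀ (c : k) (t : A), t ∈ Tset k G A gr → ract (c • t) = c • ract t)

include hadd in
theorem ract_zero : ract (0 : A) = 0 := by
  have h := hadd 0 0 (zero_mem_Tset gr) (zero_mem_Tset gr)
  rw [add_zero] at h
  have := congrArg (fun g => g - ract (0:A)) h
  simpa using this.symm

theorem sum_mem_Tset {ι : Type} (s : Finset ι) (t : ι → A)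
    (ht : ∀ i, t i ∈ Tset k G A gr) : ∑ i ∈ s, t i ∈ Tset k G A gr := by
  classical
  induction s using Finset.cons_induction with
  | empty => simpa using zero_mem_Tset gr
  | cons i s hi ih =>
    rw [Finset.sum_cons]
    exact add_mem_Tset gr (ht i) ih

include hadd in
theorem ract_sum {ι : Type} (s : Finset ι) (t : ι → A)
    (ht : ∀ i, t i ∈ Tset k G A gr) :
    ract (∑ i ∈ s, t i) = ∑ i ∈ s, ract (t i) := by
  classical
  induction s using Finset.cons_induction with
  | empty => simpa using ract_zero gr ract hadd
  | cons i s hi ih =>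
    rw [Finset.sum_cons, Finset.sum_cons,
      hadd _ _ (ht i) (sum_mem_Tset gr s t ht), ih]

/-- The retraction `ε` of the unit map. -/
noncomputable def eps : N ⊗[k] A →ₗ[k] N :=
  TensorProduct.lift (LinearMap.mk₂ k
    (fun (m : N) (a : A) => ∑ x : G.O, ract (gr.π (G.e x) a) m)
    (by intro m m' a; rw [← Finset.sum_add_distrib]
        exact Finset.sum_congr rfl (fun x _ => map_add _ _ _))
    (by intro c m a; rw [Finset.smul_sum]
        exact Finset.sum_congr rfl (fun x _ => map_smul _ _ _))
    (by intro m a b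
        rw [← Finset.sum_add_distrib]
        refine Finset.sum_congr rfl (fun x _ => ?_)
        rw [map_add, hadd _ _ (pi_e_mem_Tset gr x a) (pi_e_mem_Tset gr x b)]
        rfl)
    (by intro c m a
        rw [Finset.smul_sum]
        refine Finset.sum_congr rfl (fun x _ => ?_)
        rw [map_smul, hsmul c _ (pi_e_mem_Tset gr x a)]
        rfl))

theorem eps_tmul (m : N) (a : A) :
    eps gr ract hadd hsmul (m ⊗ₜ[k] a) = ∑ x : G.O, ract (gr.π (G.e x) a) m := rfl

include hmul in
theorem eps_bal : ∀ z ∈ balT k G A gr N ract, eps gr ract hadd hsmul z = 0 := by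
  have hle : balT k G A gr N ract ≤ LinearMap.ker (eps gr ract hadd hsmul) := by
    rw [balT, Submodule.span_le]
    rintro z ⟨m, a, t, ht, rfl⟩
    rw [SetLike.mem_coe, LinearMap.mem_ker, map_sub, eps_tmul, eps_tmul]
    rw [sub_eq_zero]
    refine Finset.sum_congr rfl (fun x _ => ?_)
    rw [← hmul t _ ht (pi_e_mem_Tset gr x a), ← pi_T_mul gr ht]
  exact fun z hz => hle hz

/-- `ε` descends to the quotient by the balancing relations. -/
noncomputable def epsQ : (N ⊗[k] A) ⧸ balT k G A gr N ract →ₗ[k] N :=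
  Submodule.liftQ _ (eps gr ract hadd hsmul)
    (fun z hz => eps_bal gr ract hmul hadd hsmul z hz)

include hmul hone in
theorem epsQ_nu (n : N) :
    epsQ gr ract hmul hadd hsmul (nuMap k G A gr N ract n) = n := by
  rw [nuMap, map_sum]
  have h1 : ∀ x : G.O,
      epsQ gr ract hmul hadd hsmul (Submodule.Quotient.mk
        ((ract (gr.π (G.e x) 1) n) ⊗ₜ[k] gr.π (G.e x) 1))
      = ract (gr.π (G.e x) 1) n := by
    intro x
    change eps gr ract hadd hsmul ((ract (gr.π (G.e x) 1) n) ⊗ₜ[k] gr.π (G.e x) 1) = _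
    rw [eps_tmul]
    have h2 : ∀ y : G.O, ract (gr.π (G.e y) (gr.π (G.e x) 1))
          (ract (gr.π (G.e x) 1) n)
        = if y = x then ract (gr.π (G.e x) 1) n else 0 := by
      intro y
      by_cases hyx : y = x
      · subst hyx
        rw [if_pos rfl, gr.pi_pi, if_pos rfl,
          ← hmul _ _ (one_mem_Tset gr y) (one_mem_Tset gr y), one_mul_one_self]
      · rw [gr.pi_pi, if_neg (fun h => hyx (e_inj G h)), if_neg hyx,
          ract_zero gr ract hadd]
        rfl
    rw [Finset.sum_congr rfl (fun y _ => h2 y)]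
    simp
  rw [Finset.sum_congr rfl (fun x _ => h1 x)]
  have h4 : ract (∑ x : G.O, gr.π (G.e x) 1) n
      = ∑ x : G.O, ract (gr.π (G.e x) 1) n := by
    rw [ract_sum gr ract hadd Finset.univ _ (fun x => one_mem_Tset gr x),
      LinearMap.sum_apply]
  rw [← h4, sum_one, hone]

include hmul hone hadd hsmul in
theorem nu_injective : Function.Injective (nuMap k G A gr N ract) := by
  intro n n' h
  have h1 := epsQ_nu gr ract hmul hone hadd hsmul n
  have h2 := epsQ_nu gr ract hmul hone hadd hsmul n'
  rw [← h1, ← h2, h]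

/-- `ν` as a linear map. -/
noncomputable def nuL : N →ₗ[k] (N ⊗[k] A) ⧸ balT k G A gr N ract :=
  ∑ x : G.O, ((balT k G A gr N ract).mkQ.comp
    (((TensorProduct.mk k N A).flip (gr.π (G.e x) 1)).comp (ract (gr.π (G.e x) 1))))

theorem nuL_eq (n : N) : nuMap k G A gr N ract n = nuL gr ract n := by
  rw [nuMap, nuL, LinearMap.sum_apply]
  rfl

include hmul in
theorem nu_onto : ∀ y ∈ CoSub k G A gr N ract, ∃ n, nuMap k G A gr N ract n = y := by
  have hle : CoSub k G A gr N ract ≤ LinearMap.range (nuL gr ract) := by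
    rw [CoSub, Submodule.span_le]
    rintro y ⟨n, t, ht, rfl⟩
    rw [SetLike.mem_coe, LinearMap.mem_range]
    refine ⟨ract t n, ?_⟩
    rw [← nuL_eq, nuMap]
    have h1 : ∀ x : G.O,
        (Submodule.Quotient.mk (((ract (gr.π (G.e x) 1)) (ract t n))
            ⊗ₜ[k] gr.π (G.e x) 1)
          : (N ⊗[k] A) ⧸ balT k G A gr N ract)
        = Submodule.Quotient.mk (n ⊗ₜ[k] (t * gr.π (G.e x) 1)) := by
      intro x
      rw [← hmul t _ ht (one_mem_Tset gr x)]
      rw [Submodule.Quotient.eq]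
      have hmem : (ract (t * gr.π (G.e x) 1) n) ⊗ₜ[k] gr.π (G.e x) 1
          - n ⊗ₜ[k] ((t * gr.π (G.e x) 1) * gr.π (G.e x) 1) ∈
            balT k G A gr N ract :=
        Submodule.subset_span ⟨n, gr.π (G.e x) 1, t * gr.π (G.e x) 1,
          Tset_mul gr ht (one_mem_Tset gr x), rfl⟩
      rw [mul_assoc, one_mul_one_self] at hmem
      exact hmem
    rw [Finset.sum_congr rfl (fun x _ => h1 x)]
    have h3 : ∀ x : G.O,
        (Submodule.Quotient.mk (n ⊗ₜ[k] (t * gr.π (G.e x) 1))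
          : (N ⊗[k] A) ⧸ balT k G A gr N ract)
        = Submodule.mkQ _ (n ⊗ₜ[k] (t * gr.π (G.e x) 1)) := fun x => rfl
    rw [Finset.sum_congr rfl (fun x _ => h3 x), ← map_sum]
    rw [← TensorProduct.tmul_sum, ← Finset.mul_sum, sum_one, mul_one]
    rfl
  intro y hy
  obtain ⟨n, hn⟩ := hle hy
  exact ⟨n, by rw [nuL_eq]; exact hn⟩

end UnitPart
end SGaux
namespace SGaux

variable {k G A}

section CounitPart

variable (gr : GradedAlg k G A) (X : GradedMod k G A gr)

theorem zmap_tmul (m : Mco k G A gr X) (a : A) :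
    zmap k G A gr X (m ⊗ₜ[k] a) = X.act a (m : X.Mc) := rfl

theorem mem_Mco_iff {m : X.Mc} :
    m ∈ Mco k G A gr X ↔ ∀ σ : G.M, (∀ x : G.O, σ ≠ G.e x) → X.πM σ m = 0 :=
  Iff.rfl

theorem mem_Mco_of_pi {y : G.O} {m : X.Mc} (h : X.πM (G.e y) m = m) :
    m ∈ Mco k G A gr X := by
  intro σ hσ
  rw [← h, X.pi_pi, if_neg (hσ y)]

theorem mco_sum {m : X.Mc} (hm : m ∈ Mco k G A gr X) :
    ∑ x : G.O, X.πM (G.e x) m = m := by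
  have h1 : ∑ σ ∈ Finset.univ.image G.e, X.πM σ m
      = ∑ x : G.O, X.πM (G.e x) m :=
    Finset.sum_image (fun x _ y _ h => e_inj G h)
  rw [← h1]
  rw [Finset.sum_subset (Finset.subset_univ _) (fun σ _ hσ => ?_)]
  · exact X.sum_pi m
  · exact hm σ (fun x hx => hσ (Finset.mem_image.2 ⟨x, Finset.mem_univ x, hx.symm⟩))

/-- For a coinvariant element, projections of `m·a` are `m·a_σ`. -/
theorem mco_pi_act {m : X.Mc} (hm : m ∈ Mco k G A gr X) (σ : G.M) (a : A) :
    X.πM σ (X.act a m) = X.act (gr.π σ a) m := by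
  have key : ∀ (τ : G.M) (x : G.O),
      X.πM σ (X.act (gr.π τ a) (X.πM (G.e x) m))
        = if σ = τ then X.act (gr.π τ a) (X.πM (G.e x) m) else 0 := by
    intro τ x
    by_cases hc : G.t τ = G.s (G.e x)
    · have h2 := X.mul_comp (G.e x) τ m a hc
      have hx : G.t τ = x := by rw [G.s_e] at hc; exact hc
      have h3 : G.comp (G.e x) τ = τ := by rw [← hx]; exact G.e_comp τ
      rw [h3] at h2
      rw [h2, X.pi_pi]
    · rw [X.mul_ncomp (G.e x) τ m a hc]
      simp
  have hexp : X.act a m = ∑ τ : G.M, ∑ x : G.O,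
      X.act (gr.π τ a) (X.πM (G.e x) m) := by
    have e1 : X.act a m = ∑ τ : G.M, X.act (gr.π τ a) m := by
      conv_lhs => rw [← gr.sum_pi a]
      rw [map_sum, LinearMap.sum_apply]
    rw [e1]
    refine Finset.sum_congr rfl (fun τ _ => ?_)
    conv_lhs => rw [← mco_sum gr X hm]
    exact map_sum (X.act (gr.π τ a)) _ _
  have hexp2 : X.act (gr.π σ a) m = ∑ x : G.O,
      X.act (gr.π σ a) (X.πM (G.e x) m) := by
    conv_lhs => rw [← mco_sum gr X hm]
    exact map_sum (X.act (gr.π σ a)) _ _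
  rw [hexp, map_sum]
  have h4 : ∀ τ : G.M, X.πM σ (∑ x : G.O, X.act (gr.π τ a) (X.πM (G.e x) m))
      = if σ = τ then ∑ x : G.O, X.act (gr.π τ a) (X.πM (G.e x) m) else 0 := by
    intro τ
    rw [map_sum, Finset.sum_congr rfl (fun x _ => key τ x)]
    by_cases hστ : σ = τ
    · simp only [if_pos hστ]
    · simp only [if_neg hστ]; simp
  rw [Finset.sum_congr rfl (fun τ _ => h4 τ), hexp2]
  simp

/-- Right unit acts as identity on the `σ`-component. -/
theorem act_one_pi (σ : G.M) (m : X.Mc) :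
    X.act (gr.π (G.e (G.s σ)) 1) (X.πM σ m) = X.πM σ m := by
  have h2 : ∑ τ : G.M, X.act (gr.π τ 1) (X.πM σ m)
      = X.act (gr.π (G.e (G.s σ)) 1) (X.πM σ m) := by
    refine Finset.sum_eq_single (G.e (G.s σ)) (fun τ _ hτ => ?_)
      (fun h => absurd (Finset.mem_univ _) h)
    by_cases hx : ∃ x : G.O, τ = G.e x
    · obtain ⟨x, rfl⟩ := hx
      refine X.mul_ncomp σ (G.e x) m 1 ?_
      rw [G.t_e]
      intro hc
      exact hτ (by rw [hc])
    · push_neg at hx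
      rw [gr.one_supp τ hx, map_zero]
      rfl
  calc X.act (gr.π (G.e (G.s σ)) 1) (X.πM σ m)
      = ∑ τ : G.M, X.act (gr.π τ 1) (X.πM σ m) := h2.symm
    _ = X.act 1 (X.πM σ m) := by
        conv_rhs => rw [← gr.sum_pi 1]
        rw [map_sum, LinearMap.sum_apply]
    _ = X.πM σ m := by rw [X.act_one]; rfl

theorem act_mem_Mco (σ : G.M) {u : A} (hu : u ∈ Asub k G A gr (G.inv σ))
    (m : X.Mc) : X.act u (X.πM σ m) ∈ Mco k G A gr X := by
  have h1 := X.mul_comp σ (G.inv σ) m u (by rw [G.t_inv])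
  rw [G.comp_inv] at h1
  rw [mem_Asub] at hu
  rw [hu] at h1
  exact mem_Mco_of_pi gr X h1.symm

theorem act_T_mem_Mco {t : A} (ht : t ∈ Tset k G A gr) {m : X.Mc}
    (hm : m ∈ Mco k G A gr X) : X.act t m ∈ Mco k G A gr X := by
  intro σ hσ
  rw [mco_pi_act gr X hm, ht σ hσ, map_zero]
  rfl

/-- The counit kills the balancing relations (no hypotheses needed). -/
theorem zmap_kills : ∀ z ∈ balMod k G A gr X, zmap k G A gr X z = 0 := by
  have hle : balMod k G A gr X ≤ LinearMap.ker (zmap k G A gr X) := by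
    rw [balMod, Submodule.span_le]
    rintro z ⟨m, m', t, a, ht, hm', rfl⟩
    rw [SetLike.mem_coe, LinearMap.mem_ker, map_sub, zmap_tmul, zmap_tmul,
      hm', X.act_mul]
    simp
  exact fun z hz => hle hz

/-- Surjectivity of the counit, given partial units. -/
theorem zmap_surj (hP : Pprop gr) :
    Function.Surjective (zmap k G A gr X) := by
  choose n u v hu hv huv using fun σ => Punit gr hP σ
  intro m
  refine ⟨∑ σ : G.M, ∑ j : Fin (n σ),
    (⟨X.act (u σ j) (X.πM σ m), act_mem_Mco gr X σ (hu σ j) m⟩ :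
      Mco k G A gr X) ⊗ₜ[k] v σ j, ?_⟩
  rw [map_sum]
  have h1 : ∀ σ : G.M, zmap k G A gr X (∑ j : Fin (n σ),
      (⟨X.act (u σ j) (X.πM σ m), act_mem_Mco gr X σ (hu σ j) m⟩ :
        Mco k G A gr X) ⊗ₜ[k] v σ j) = X.πM σ m := by
    intro σ
    rw [map_sum]
    have h2 : ∀ j : Fin (n σ), zmap k G A gr X
        ((⟨X.act (u σ j) (X.πM σ m), act_mem_Mco gr X σ (hu σ j) m⟩ :
          Mco k G A gr X) ⊗ₜ[k] v σ j)
        = X.act (u σ j * v σ j) (X.πM σ m) := by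
      intro j
      rw [zmap_tmul, X.act_mul]
      rfl
    rw [Finset.sum_congr rfl (fun j _ => h2 j)]
    have h3 : ∑ j : Fin (n σ), X.act (u σ j * v σ j) (X.πM σ m)
        = X.act (∑ j : Fin (n σ), u σ j * v σ j) (X.πM σ m) := by
      rw [map_sum, LinearMap.sum_apply]
    rw [h3, huv σ, act_one_pi]
  rw [Finset.sum_congr rfl (fun σ _ => h1 σ)]
  exact X.sum_pi m

/-- The kernel of the counit is the balancing submodule, given partial units. -/
theorem zmap_ker (hP : Pprop gr) :
    ∀ z, zmap k G A gr X z = 0 → z ∈ balMod k G A gr X := by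
  choose n u v hu hv huv using fun σ => Punit gr hP σ
  -- the section γ₀
  set γ : X.Mc →ₗ[k] (Mco k G A gr X) ⊗[k] A :=
    ∑ σ : G.M, ∑ j : Fin (n σ),
      ((TensorProduct.mk k (Mco k G A gr X) A).flip (v σ j)).comp
        (LinearMap.codRestrict (Mco k G A gr X)
          ((X.act (u σ j)).comp (X.πM σ))
          (fun m => act_mem_Mco gr X σ (hu σ j) m)) with hγ
  have hγ_apply : ∀ m : X.Mc, γ m = ∑ σ : G.M, ∑ j : Fin (n σ),
      (⟨X.act (u σ j) (X.πM σ m), act_mem_Mco gr X σ (hu σ j) m⟩ :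
        Mco k G A gr X) ⊗ₜ[k] v σ j := by
    intro m
    rw [hγ, LinearMap.sum_apply]
    refine Finset.sum_congr rfl (fun σ _ => ?_)
    rw [LinearMap.sum_apply]
    rfl
  have claim : ∀ z : Mco k G A gr X ⊗[k] A,
      γ (zmap k G A gr X z) - z ∈ balMod k G A gr X := by
    intro z
    induction z using TensorProduct.induction_on with
    | zero => rw [map_zero, map_zero, sub_zero]; exact Submodule.zero_mem _
    | add x y hx hy =>
      rw [map_add, map_add, add_sub_add_comm]
      exact Submodule.add_mem _ hx hy
    | tmul m a =>
      rw [zmap_tmul, hγ_apply]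
      have hT : ∀ (σ : G.M) (j : Fin (n σ)),
          gr.π σ a * u σ j ∈ Tset k G A gr := by
        intro σ j
        apply mem_Tset_of_pi gr (y := G.t σ)
        have h5 := gr.mul_comp σ (G.inv σ) a (u σ j) (by rw [G.t_inv])
        rw [G.comp_inv] at h5
        rw [hu σ j] at h5
        exact h5.symm
      have hterm : ∀ (σ : G.M) (j : Fin (n σ)),
          (⟨X.act (u σ j) (X.πM σ (X.act a (m : X.Mc))),
            act_mem_Mco gr X σ (hu σ j) _⟩ : Mco k G A gr X)
          = ⟨X.act (gr.π σ a * u σ j) (m : X.Mc),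
              act_T_mem_Mco gr X (hT σ j) m.2⟩ := by
        intro σ j
        apply Subtype.ext
        show X.act (u σ j) (X.πM σ (X.act a (m : X.Mc)))
          = X.act (gr.π σ a * u σ j) (m : X.Mc)
        rw [mco_pi_act gr X m.2, X.act_mul]
        rfl
      have hsplit : (m : Mco k G A gr X) ⊗ₜ[k] a
          = ∑ σ : G.M, ∑ j : Fin (n σ),
            m ⊗ₜ[k] ((gr.π σ a * u σ j) * v σ j) := by
        have h6 : ∀ σ : G.M,
            ∑ j : Fin (n σ), (gr.π σ a * u σ j) * v σ j = gr.π σ a := by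
          intro σ
          have hass : ∀ j : Fin (n σ), (gr.π σ a * u σ j) * v σ j
              = gr.π σ a * (u σ j * v σ j) := fun j => mul_assoc _ _ _
          rw [Finset.sum_congr rfl (fun j _ => hass j), ← Finset.mul_sum, huv]
          rw [pi_mul_one]
        conv_lhs => rw [← gr.sum_pi a, TensorProduct.tmul_sum]
        refine Finset.sum_congr rfl (fun σ _ => ?_)
        rw [← TensorProduct.tmul_sum, h6 σ]
      rw [Finset.sum_congr rfl (fun σ _ => Finset.sum_congr rfl
        (fun j _ => congrArg (· ⊗ₜ[k] v σ j) (hterm σ j)))]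
      rw [hsplit, ← Finset.sum_sub_distrib]
      apply Submodule.sum_mem
      intro σ _
      rw [← Finset.sum_sub_distrib]
      apply Submodule.sum_mem
      intro j _
      exact Submodule.subset_span ⟨m, _, gr.π σ a * u σ j, v σ j, hT σ j,
        rfl, rfl⟩
  intro z hz
  have h7 := claim z
  rw [hz, map_zero, zero_sub] at h7
  have := Submodule.neg_mem _ h7
  rwa [neg_neg] at this

end CounitPart
end SGaux
namespace SGaux

variable {k G A}

theorem nu_mem (gr : GradedAlg k G A) {N : Type} [AddCommGroup N] [Module k N]
    (ract : A → N →ₗ[k] N) (n : N) :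
    nuMap k G A gr N ract n ∈ CoSub k G A gr N ract := by
  rw [nuMap]
  apply Submodule.sum_mem
  intro x _
  apply Submodule.subset_span
  exact ⟨ract (gr.π (G.e x) 1) n, gr.π (G.e x) 1, one_mem_Tset gr x, rfl⟩

/-- The submodule `1_{tρ}·A ⊆ A`, underlying the shifted module `A(ρ)`. -/
def Qsub (gr : GradedAlg k G A) (ρ : G.M) : Submodule k A where
  carrier := {a : A | gr.π (G.e (G.t ρ)) 1 * a = a}
  add_mem' := by
    intro a b ha hb
    simp only [Set.mem_setOf_eq] at *
    rw [mul_add, ha, hb]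
  zero_mem' := by simp
  smul_mem' := by
    intro c a ha
    simp only [Set.mem_setOf_eq] at *
    rw [mul_smul_comm, ha]

theorem Qsub_act_mem (gr : GradedAlg k G A) (ρ : G.M) (m : Qsub gr ρ) (b : A) :
    (m : A) * b ∈ Qsub gr ρ := by
  have hm : gr.π (G.e (G.t ρ)) 1 * (m : A) = (m : A) := m.2
  show gr.π (G.e (G.t ρ)) 1 * ((m : A) * b) = (m : A) * b
  rw [← mul_assoc, hm]

/-- Right multiplication on `Qsub`. -/
noncomputable def shiftAct (gr : GradedAlg k G A) (ρ : G.M) :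
    A →ₗ[k] Module.End k (Qsub gr ρ) where
  toFun b :=
    { toFun := fun m => ⟨(m : A) * b, Qsub_act_mem gr ρ m b⟩
      map_add' := by
        intro m m'; apply Subtype.ext
        show ((m : A) + (m' : A)) * b = (m : A) * b + (m' : A) * b
        rw [add_mul]
      map_smul' := by
        intro c m; apply Subtype.ext
        show (c • (m : A)) * b = c • ((m : A) * b)
        rw [smul_mul_assoc] }
  map_add' := by
    intro b c; apply LinearMap.ext; intro m; apply Subtype.ext
    show (m : A) * (b + c) = (m : A) * b + (m : A) * c
    rw [mul_add]
  map_smul' := by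
    intro c b; apply LinearMap.ext; intro m; apply Subtype.ext
    show (m : A) * (c • b) = c • ((m : A) * b)
    rw [mul_smul_comm]

theorem shiftPi_mem (gr : GradedAlg k G A) (ρ σ : G.M) (h : G.t σ = G.s ρ)
    (m : Qsub gr ρ) : gr.π (G.comp ρ σ) (m : A) ∈ Qsub gr ρ := by
  show gr.π (G.e (G.t ρ)) 1 * gr.π (G.comp ρ σ) (m : A) = gr.π (G.comp ρ σ) (m : A)
  have h1 := one_mul_pi gr (G.comp ρ σ) (m : A)
  rw [G.t_comp ρ σ h] at h1
  exact h1

/-- The grading on the shifted module. -/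
noncomputable def shiftPi (gr : GradedAlg k G A) (ρ σ : G.M) :
    Qsub gr ρ →ₗ[k] Qsub gr ρ :=
  if h : G.t σ = G.s ρ then
    { toFun := fun m => ⟨gr.π (G.comp ρ σ) (m : A), shiftPi_mem gr ρ σ h m⟩
      map_add' := by
        intro m m'; apply Subtype.ext
        show gr.π (G.comp ρ σ) ((m : A) + (m' : A)) = _
        rw [map_add]; rfl
      map_smul' := by
        intro c m; apply Subtype.ext
        show gr.π (G.comp ρ σ) (c • (m : A)) = c • gr.π (G.comp ρ σ) (m : A)
        rw [map_smul] }
  else 0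

theorem shiftPi_coe (gr : GradedAlg k G A) (ρ σ : G.M) (m : Qsub gr ρ) :
    ((shiftPi gr ρ σ m : Qsub gr ρ) : A)
      = if G.t σ = G.s ρ then gr.π (G.comp ρ σ) (m : A) else 0 := by
  rw [shiftPi]
  split_ifs with h
  · rfl
  · rfl

/-- The shifted graded module `A(ρ)`. -/
noncomputable def shiftMod (gr : GradedAlg k G A) (ρ : G.M) :
    GradedMod k G A gr where
  Mc := Qsub gr ρ
  act := shiftAct gr ρ
  act_one := by
    apply LinearMap.ext; intro m; apply Subtype.ext
    show (m : A) * 1 = (m : A)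
    rw [mul_one]
  act_mul := by
    intro a b; apply LinearMap.ext; intro m; apply Subtype.ext
    show (m : A) * (a * b) = ((m : A) * a) * b
    rw [mul_assoc]
  πM := shiftPi gr ρ
  sum_pi := by
    intro m
    apply Subtype.ext
    rw [AddSubmonoidClass.coe_finset_sum]
    have h1 : ∀ σ : G.M, ((shiftPi gr ρ σ m : Qsub gr ρ) : A)
        = if G.t σ = G.s ρ then gr.π (G.comp ρ σ) (m : A) else 0 :=
      fun σ => shiftPi_coe gr ρ σ m
    rw [Finset.sum_congr rfl (fun σ _ => h1 σ)]
    have h2 : ∑ σ : G.M, (if G.t σ = G.s ρ then gr.π (G.comp ρ σ) (m : A) else 0)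
        = ∑ τ : G.M, (if G.t τ = G.t ρ then gr.π τ (m : A) else 0) := by
      rw [← Finset.sum_filter, ← Finset.sum_filter]
      refine Finset.sum_nbij' (fun σ => G.comp ρ σ) (fun τ => G.comp (G.inv ρ) τ)
        ?_ ?_ ?_ ?_ ?_
      · intro σ hσ
        rw [Finset.mem_filter] at hσ ⊢
        exact ⟨Finset.mem_univ _, G.t_comp ρ σ hσ.2⟩
      · intro τ hτ
        rw [Finset.mem_filter] at hτ ⊢
        refine ⟨Finset.mem_univ _, ?_⟩
        rw [G.t_comp (G.inv ρ) τ (by rw [hτ.2, G.s_inv]), G.t_inv]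
      · intro σ hσ
        rw [Finset.mem_filter] at hσ
        rw [← G.comp_assoc (G.inv ρ) ρ σ (G.s_inv ρ).symm hσ.2, G.inv_comp,
          ← hσ.2, G.e_comp]
      · intro τ hτ
        rw [Finset.mem_filter] at hτ
        rw [← G.comp_assoc ρ (G.inv ρ) τ (G.t_inv ρ) (by rw [hτ.2, G.s_inv]),
          G.comp_inv, ← hτ.2, G.e_comp]
      · intro σ hσ
        rfl
    rw [h2, one_filter_mul]
    exact m.2
  pi_pi := by
    intro σ τ m
    by_cases hστ : σ = τ
    · subst hστ
      rw [if_pos rfl]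
      apply Subtype.ext
      rw [shiftPi_coe]
      by_cases h : G.t σ = G.s ρ
      · rw [if_pos h, shiftPi_coe, if_pos h, gr.pi_pi, if_pos rfl]
      · rw [if_neg h, shiftPi_coe, if_neg h]
    · rw [if_neg hστ]
      apply Subtype.ext
      rw [shiftPi_coe]
      by_cases h : G.t σ = G.s ρ
      · rw [if_pos h, shiftPi_coe]
        by_cases h' : G.t τ = G.s ρ
        · rw [if_pos h', gr.pi_pi, if_neg, Submodule.coe_zero]
          intro hcontra
          exact hστ (left_cancel G ρ σ τ h h' hcontra)
        · rw [if_neg h', map_zero, Submodule.coe_zero]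
      · rw [if_neg h, Submodule.coe_zero]
  mul_comp := by
    intro σ τ m a hc
    apply Subtype.ext
    show ((shiftPi gr ρ σ m : Qsub gr ρ) : A) * gr.π τ a = _
    by_cases h : G.t σ = G.s ρ
    · have hcc : G.t (G.comp σ τ) = G.s ρ := by rw [G.t_comp σ τ hc, h]
      have hval : ((shiftPi gr ρ σ m : Qsub gr ρ) : A) = gr.π (G.comp ρ σ) (m : A) := by
        rw [shiftPi_coe, if_pos h]
      rw [hval]
      have h4 := gr.mul_comp (G.comp ρ σ) τ (m : A) a
        (by rw [G.s_comp ρ σ h]; exact hc)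
      have h5 : G.comp (G.comp ρ σ) τ = G.comp ρ (G.comp σ τ) :=
        G.comp_assoc ρ σ τ h hc
      rw [h5] at h4
      have hrhs : ((shiftPi gr ρ (G.comp σ τ)
            (shiftAct gr ρ (gr.π τ a) (shiftPi gr ρ σ m)) : Qsub gr ρ) : A)
          = gr.π (G.comp ρ (G.comp σ τ))
              (gr.π (G.comp ρ σ) (m : A) * gr.π τ a) := by
        rw [shiftPi_coe, if_pos hcc]
        congr 1
        show (shiftAct gr ρ (gr.π τ a) (shiftPi gr ρ σ m) : A) = _
        show ((shiftPi gr ρ σ m : Qsub gr ρ) : A) * gr.π τ a = _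
        rw [hval]
      rw [hrhs]
      exact h4
    · have hval : ((shiftPi gr ρ σ m : Qsub gr ρ) : A) = 0 := by
        rw [shiftPi_coe, if_neg h]
      rw [hval, zero_mul]
      have hcc : ¬ G.t (G.comp σ τ) = G.s ρ := by
        rw [G.t_comp σ τ hc]; exact h
      rw [shiftPi_coe, if_neg hcc]
  mul_ncomp := by
    intro σ τ m a hc
    apply Subtype.ext
    show ((shiftPi gr ρ σ m : Qsub gr ρ) : A) * gr.π τ a = 0
    by_cases h : G.t σ = G.s ρ
    · rw [shiftPi_coe, if_pos h]
      have h2 : gr.π (G.comp ρ σ) ((m : A)) * gr.π τ a = 0 := by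
        refine gr.mul_ncomp (G.comp ρ σ) τ (m : A) a ?_
        rw [G.s_comp ρ σ h]
        exact hc
      exact h2
    · rw [shiftPi_coe, if_neg h, zero_mul]

/-- The equivalence property implies partial units. -/
theorem equiv_P (gr : GradedAlg k G A) (hEq : IsEquivalencePair k G A gr) :
    Pprop gr := by
  intro ρ
  obtain ⟨-, -, hsurj⟩ := hEq.1 (shiftMod gr ρ)
  have hmem1 : gr.π (G.e (G.t ρ)) 1 ∈ Qsub gr ρ := by
    show gr.π (G.e (G.t ρ)) 1 * gr.π (G.e (G.t ρ)) 1 = gr.π (G.e (G.t ρ)) 1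
    exact one_mul_one_self gr (G.t ρ)
  obtain ⟨z, hz⟩ := hsurj
    ((⟨gr.π (G.e (G.t ρ)) 1, hmem1⟩ : Qsub gr ρ) : (shiftMod gr ρ).Mc)
  let val : (shiftMod gr ρ).Mc →ₗ[k] A := (Qsub gr ρ).subtype
  -- every coinvariant element of the shifted module is homogeneous of degree ρ
  have hcoinv : ∀ m : Mco k G A gr (shiftMod gr ρ),
      gr.π ρ (val (m : (shiftMod gr ρ).Mc)) = val (m : (shiftMod gr ρ).Mc) := by
    intro m
    set mA : A := val (m : (shiftMod gr ρ).Mc) with hmA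
    have hQ : gr.π (G.e (G.t ρ)) 1 * mA = mA := by
      exact ((m : (shiftMod gr ρ).Mc) : Qsub gr ρ).2
    have hvanish : ∀ τ : G.M, τ ≠ ρ → gr.π τ mA = 0 := by
      intro τ hτρ
      by_cases htt : G.t τ = G.t ρ
      · -- use the coinvariance of m
        set σ' : G.M := G.comp (G.inv ρ) τ with hσ'
        have hcσ : G.t τ = G.s (G.inv ρ) := by rw [G.s_inv]; exact htt
        have htσ' : G.t σ' = G.s ρ := by
          rw [hσ', G.t_comp (G.inv ρ) τ hcσ, G.t_inv]
        have hρσ' : G.comp ρ σ' = τ := by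
          rw [hσ', ← G.comp_assoc ρ (G.inv ρ) τ (G.t_inv ρ) hcσ,
            G.comp_inv, ← htt, G.e_comp]
        have hnonid : ∀ x : G.O, σ' ≠ G.e x := by
          intro x hx
          have hx2 : x = G.s ρ := by
            have h6 := G.t_e x
            rw [← hx, htσ'] at h6
            exact h6.symm
          rw [hx2] at hx
          have h7 : τ = ρ := by
            rw [← hρσ', hx, G.comp_e]
          exact hτρ h7
        have hM := m.2 σ' hnonid
        have hval := congrArg val hM
        rw [map_zero] at hval
        have hcoe : val ((shiftMod gr ρ).πM σ' (m : (shiftMod gr ρ).Mc))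
            = gr.π (G.comp ρ σ') mA := by
          show ((shiftPi gr ρ σ' ((m : (shiftMod gr ρ).Mc)) : Qsub gr ρ) : A) = _
          erw [shiftPi_coe, if_pos htσ']
          rfl
        rw [hcoe, hρσ'] at hval
        exact hval
      · -- source mismatch: component dies on 1_{tρ}·A
        rw [← hQ, pi_T_mul gr (one_mem_Tset gr (G.t ρ))]
        exact gr.mul_ncomp (G.e (G.t ρ)) τ 1 mA (by rw [G.s_e]; exact htt)
    have hsum : ∑ τ : G.M, gr.π τ mA = mA := gr.sum_pi mA
    rw [Finset.sum_eq_single ρ (fun τ _ hτ => hvanish τ hτ)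
      (fun h => absurd (Finset.mem_univ _) h)] at hsum
    exact hsum
  -- extract the component of degree `e (t ρ)`
  have key : ∀ w : (Mco k G A gr (shiftMod gr ρ)) ⊗[k] A,
      gr.π (G.e (G.t ρ)) (val (zmap k G A gr (shiftMod gr ρ) w)) ∈
        Submodule.span k {p : A | ∃ a ∈ Asub k G A gr ρ,
          ∃ b ∈ Asub k G A gr (G.inv ρ), p = a * b} := by
    intro w
    induction w using TensorProduct.induction_on with
    | zero => rw [map_zero, map_zero]; simp
    | add x y hx hy =>
      rw [map_add, map_add, map_add]
      exact Submodule.add_mem _ hx hy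
    | tmul m a =>
      have hval : val (zmap k G A gr (shiftMod gr ρ) (m ⊗ₜ[k] a))
          = val (m : (shiftMod gr ρ).Mc) * a := rfl
      have h10 : gr.π (G.e (G.t ρ)) (val (m : (shiftMod gr ρ).Mc) * a)
          = gr.π ρ (val (m : (shiftMod gr ρ).Mc)) * gr.π (G.inv ρ) a := by
        conv_lhs => rw [← hcoinv m]
        rw [extract_left]
      rw [hval, h10]
      exact Submodule.subset_span ⟨_, pi_mem_Asub gr ρ _, _,
        pi_mem_Asub gr (G.inv ρ) a, rfl⟩
  have h8 := key z
  rw [hz] at h8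
  have h9 : val ((⟨gr.π (G.e (G.t ρ)) 1, hmem1⟩ : Qsub gr ρ) : (shiftMod gr ρ).Mc)
      = gr.π (G.e (G.t ρ)) 1 := rfl
  rw [h9, gr.pi_pi, if_pos rfl] at h8
  exact span_prod_extract gr ρ (G.inv ρ) _ h8

end SGaux
namespace SGaux

theorem main (gr : GradedAlg k G A) :
    (StronglyGraded k G A gr ↔ IsEquivalencePair k G A gr) ∧
    (StronglyGraded k G A gr ↔ CanBijective k G A gr) ∧
    (StronglyGraded k G A gr ↔ CanSurjective k G A gr) := by
  have hSB : StronglyGraded k G A gr → CanBijective k G A gr :=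
    fun h => SG_canBijective gr (strongly_graded_P gr h)
  have hBS : CanBijective k G A gr → StronglyGraded k G A gr :=
    fun h => P_strongly_graded gr (can_surj_P gr (fun f hf => h.2.2.2 f hf))
  refine ⟨⟨?_, ?_⟩, ⟨hSB, hBS⟩,
    ⟨fun h => (hSB h).2.2.2, fun h => P_strongly_graded gr (can_surj_P gr h)⟩⟩
  · intro hS
    have hP := strongly_graded_P gr hS
    constructor
    · intro X
      exact ⟨zmap_kills gr X, zmap_ker gr X hP, zmap_surj gr X hP⟩
    · intro N acg mod ract hmul hone hadd hsmul
      letI := acg; letI := mod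
      exact ⟨nu_mem gr ract, nu_injective gr ract hmul hone hadd hsmul,
        nu_onto gr ract hmul⟩
  · intro hEq
    exact P_strongly_graded gr (equiv_P gr hEq)

end SGaux

/-- for a groupoid `G` and a `G`-graded `k`-algebra `A`, the
following are equivalent: (1) `A` is strongly graded; (2) the adjoint pair
`(−⊗_T A, (−)^{co kG})` is an equivalence between right `T`-modules and
`G`-graded right `A`-modules; (3) the canonical map
`can : A ⊗_T A → ⊕_σ A·1_{s(σ)} ⊗ u_σ`, `can(a⊗b) = ∑_σ a b_σ ⊗ u_σ`, is
bijective; (4) `can` is surjective. -/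
theorem strongly_graded_tfae (gr : GradedAlg k G A) :
    (StronglyGraded k G A gr ↔ IsEquivalencePair k G A gr) ∧
    (StronglyGraded k G A gr ↔ CanBijective k G A gr) ∧
    (StronglyGraded k G A gr ↔ CanSurjective k G A gr) := by
  exact SGaux.main k G A gr
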